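/- Fix predictor matrices X_{d,i} ∈ ℝ^{P_d×R} and responses y_i ∈ ℝ for i = 1,…,N, a density f : ℝ → ℝ with f > 0, and a penalty r(B) = λ Σ_{j,k} |B_{jk}| with λ ≥ 0. For b > 0 define the scaled data y_i' = b·y_i. Then for all B̃_d ∈ ℝ^{P_d×R}, α ∈ ℝ, σ > 0, the scale-penalized objective L_b(bα, bB̃_d, bσ) := −N ln(bσ) + Σ_{i=1}^{N} ln f((y_i' − bα − ⟨bB̃_d, X_{d,i}⟩)/(bσ)) − r(bB̃_d/(bσ)) satisfies L_b(bα, bB̃_d, bσ) = L_1(α, B̃_d, σ) − N ln b, where L_1(α, B̃_d, σ) = −N ln σ + Σ_{i=1}^{N} ln f((y_i − α − ⟨B̃_d, X_{d,i}⟩)/σ) − r(B̃_d/σ). Consequently, (α̂, B̂, σ̂) maximizes L_1 over ℝ × ℝ^{P_d×R} × (0,∞) if and only if (bα̂, bB̂, bσ̂) maximizes (α', B', σ') ↦ −N ln σ' + Σ_i ln f((y_i' − α' − ⟨B', X_{d,i}⟩)/σ') − r(B'/σ'); i.e., the estimates are invariant under scaling of the response. -/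

import Mathlib

/-!
STATEMENT 9: Scale invariance of the σ-scaled ℓ₁-penalized location-scale objective.
-/

open Matrix

theorem statement_9 {Pd R N : ℕ}
    (X : Fin N → Matrix (Fin Pd) (Fin R) ℝ) (y : Fin N → ℝ)
    (f : ℝ → ℝ) (hf : ∀ x, 0 < f x)
    (lam : ℝ) (hlam : 0 ≤ lam)
    (b : ℝ) (hb : 0 < b)
    -- the σ-scaled ℓ₁-penalized objective, for response vector `ys`
    (L : (Fin N → ℝ) → ℝ → Matrix (Fin Pd) (Fin R) ℝ → ℝ → ℝ)
    (hL : ∀ ys α B σ, L ys α B σ =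
      -(N : ℝ) * Real.log σ +
        ∑ i, Real.log (f ((ys i - α - ∑ j, ∑ k, B j k * X i j k) / σ)) -
        lam * ∑ j, ∑ k, |B j k / σ|) :
    -- (1) `L_b(bα, bB̃_d, bσ) = L_1(α, B̃_d, σ) − N ln b`
    (∀ (α : ℝ) (B : Matrix (Fin Pd) (Fin R) ℝ) (σ : ℝ), 0 < σ →
        L (fun i => b * y i) (b * α) (b • B) (b * σ)
          = L y α B σ - (N : ℝ) * Real.log b) ∧
    -- (2) the estimates are invariant under scaling of the response
    (∀ (αh : ℝ) (Bh : Matrix (Fin Pd) (Fin R) ℝ) (σh : ℝ), 0 < σh →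
        ((∀ α B σ, 0 < σ → L y α B σ ≤ L y αh Bh σh) ↔
         (∀ α B σ, 0 < σ →
            L (fun i => b * y i) α B σ ≤
              L (fun i => b * y i) (b * αh) (b • Bh) (b * σh)))) := by
  have hb0 : b ≠ 0 := ne_of_gt hb
  have key : ∀ (α : ℝ) (B : Matrix (Fin Pd) (Fin R) ℝ) (σ : ℝ), 0 < σ →
      L (fun i => b * y i) (b * α) (b • B) (b * σ)
        = L y α B σ - (N : ℝ) * Real.log b := by
    intro α B σ hσ
    rw [hL, hL]
    have hlog : Real.log (b * σ) = Real.log b + Real.log σ :=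
      Real.log_mul hb0 (ne_of_gt hσ)
    have harg : ∀ i : Fin N,
        (b * y i - b * α - ∑ j, ∑ k, (b • B) j k * X i j k) / (b * σ)
          = (y i - α - ∑ j, ∑ k, B j k * X i j k) / σ := by
      intro i
      have : ∑ j, ∑ k, (b • B) j k * X i j k
          = b * ∑ j, ∑ k, B j k * X i j k := by
        simp [Finset.mul_sum, mul_assoc]
      rw [this]
      field_simp
    have hpen : ∀ (j : Fin Pd) (k : Fin R), |(b • B) j k / (b * σ)| = |B j k / σ| := by
      intro j k
      have : (b • B) j k / (b * σ) = B j k / σ := by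
        simp only [Matrix.smul_apply, smul_eq_mul]
        field_simp
      rw [this]
    simp only [harg, hpen, hlog]
    ring
  refine ⟨key, ?_⟩
  intro αh Bh σh hσh
  constructor
  · intro hmax α B σ hσ
    have h1 : α = b * (α / b) := by field_simp
    have h2 : B = b • (b⁻¹ • B) := by rw [smul_smul]; field_simp; rw [one_smul]
    have h3 : σ = b * (σ / b) := by field_simp
    calc L (fun i => b * y i) α B σ
        = L (fun i => b * y i) (b * (α / b)) (b • (b⁻¹ • B)) (b * (σ / b)) := by
          rw [← h1, ← h2, ← h3]
      _ = L y (α / b) (b⁻¹ • B) (σ / b) - (N : ℝ) * Real.log b :=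
          key _ _ _ (div_pos hσ hb)
      _ ≤ L y αh Bh σh - (N : ℝ) * Real.log b := by
          linarith [hmax (α / b) (b⁻¹ • B) (σ / b) (div_pos hσ hb)]
      _ = L (fun i => b * y i) (b * αh) (b • Bh) (b * σh) := (key _ _ _ hσh).symm ▸ rfl
  · intro hmax α B σ hσ
    have e1 := key α B σ hσ
    have e2 := key αh Bh σh hσh
    have := hmax (b * α) (b • B) (b * σ) (mul_pos hb hσ)
    linarith
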